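/- The (+1)-eigenspace of P is the span E⁺ of {a₅₆³e₁ − a₅₆a₄₆²e₃ + a₄₆³e₄, −a₅₆e₁ + a₄₆e₂, e₅} and the (−1)-eigenspace of P is the span E⁻ of {e₁, −a₅₆e₂ + a₄₆e₃, −a₅₆²e₅ + a₄₆²e₆}; both are 3-dimensional, and neither E⁺ nor E⁻ is closed under the Lie bracket of 𝔤₁ (so P is a non-integrable almost para-complex structure). -/

import Mathlib

noncomputable section

open LinearMap Module

abbrev V : Type := Fin 6 → ℝ

def e (i : Fin 6) : V := Pi.single i 1

set_option maxHeartbeats 1000000 in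
theorem stmt_6
    (a46 a56 : ℝ) (ha46 : a46 ≠ 0) (ha56 : a56 ≠ 0)
    (B : V →ₗ[ℝ] V →ₗ[ℝ] V)
    (hBanti : ∀ X Y, B X Y = - B Y X)
    (hB1 : B (e 0) (e 1) = e 2)
    (hB2 : B (e 0) (e 2) = e 3)
    (hB3 : B (e 0) (e 3) = e 4)
    (hB4 : B (e 1) (e 2) = e 4)
    (hB5 : B (e 2) (e 3) = e 5)
    (hB6 : B (e 1) (e 4) = -e 5)
    (hBz : ∀ i j : Fin 6, i < j → (i, j) ∉ ({(0,1),(0,2),(0,3),(1,2),(2,3),(1,4)} : Set (Fin 6 × Fin 6)) → B (e i) (e j) = 0)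
    (P : Module.End ℝ V)
    (hP1 : P (e 0) = -e 0)
    (hP2 : P (e 1) = -(2*a56/a46) • e 0 + e 1)
    (hP3 : P (e 2) = -(2*a56^2/a46^2) • e 0 + (2*a56/a46) • e 1 - e 2)
    (hP4 : P (e 3) = (2*a56^2/a46^2) • e 1 - (2*a56/a46) • e 2 + e 3)
    (hP5 : P (e 4) = e 4)
    (hP6 : P (e 5) = (2*a56^2/a46^2) • e 4 - e 5)
    (Ep Em : Submodule ℝ V)
    (hEp : Ep = Submodule.span ℝ ({a56^3 • e 0 - (a56*a46^2) • e 2 + a46^3 • e 3, -a56 • e 0 + a46 • e 1, e 4} : Set V))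
    (hEm : Em = Submodule.span ℝ ({(e 0 : V), -a56 • e 1 + a46 • e 2, -a56^2 • e 4 + a46^2 • e 5} : Set V)) :
    Module.End.eigenspace P 1 = Ep ∧
    Module.End.eigenspace P (-1) = Em ∧
    Module.finrank ℝ Ep = 3 ∧
    Module.finrank ℝ Em = 3 ∧
    ¬ (∀ X ∈ Ep, ∀ Y ∈ Ep, B X Y ∈ Ep) ∧
    ¬ (∀ X ∈ Em, ∀ Y ∈ Em, B X Y ∈ Em) := by
  classical
  have hg1m : a56^3 • e 0 - (a56*a46^2) • e 2 + a46^3 • e 3 ∈ Ep := by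
    rw [hEp]; exact Submodule.subset_span (Set.mem_insert _ _)
  have hg2m : -a56 • e 0 + a46 • e 1 ∈ Ep := by
    rw [hEp]; exact Submodule.subset_span (Set.mem_insert_of_mem _ (Set.mem_insert _ _))
  have hg3m : e 4 ∈ Ep := by
    rw [hEp]; exact Submodule.subset_span (Set.mem_insert_of_mem _ (Set.mem_insert_of_mem _ rfl))
  have hh1m : e 0 ∈ Em := by
    rw [hEm]; exact Submodule.subset_span (Set.mem_insert _ _)
  have hh2m : -a56 • e 1 + a46 • e 2 ∈ Em := by
    rw [hEm]; exact Submodule.subset_span (Set.mem_insert_of_mem _ (Set.mem_insert _ _))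
  have hh3m : -a56^2 • e 4 + a46^2 • e 5 ∈ Em := by
    rw [hEm]; exact Submodule.subset_span (Set.mem_insert_of_mem _ (Set.mem_insert_of_mem _ rfl))
  -- P fixes generators of Ep
  have kg1 : P (a56^3 • e 0 - (a56*a46^2) • e 2 + a46^3 • e 3)
      = a56^3 • e 0 - (a56*a46^2) • e 2 + a46^3 • e 3 := by
    simp only [map_add, map_sub, map_smul, hP1, hP3, hP4]
    funext x; fin_cases x <;> simp [e, Pi.single_apply] <;> (try field_simp) <;> (try ring)
  have kg2 : P (-a56 • e 0 + a46 • e 1) = -a56 • e 0 + a46 • e 1 := by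
    simp only [map_add, map_smul, hP1, hP2]
    funext x; fin_cases x <;> simp [e, Pi.single_apply] <;> (try field_simp) <;> (try ring)
  have kg3 : P (e 4) = e 4 := hP5
  have kh1 : P (e 0) = -(e 0) := hP1
  have kh2 : P (-a56 • e 1 + a46 • e 2) = -(-a56 • e 1 + a46 • e 2) := by
    simp only [map_add, map_smul, hP2, hP3]
    funext x; fin_cases x <;> simp [e, Pi.single_apply] <;> (try field_simp) <;> (try ring)
  have kh3 : P (-a56^2 • e 4 + a46^2 • e 5) = -(-a56^2 • e 4 + a46^2 • e 5) := by
    simp only [map_add, map_smul, hP5, hP6]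
    funext x; fin_cases x <;> simp [e, Pi.single_apply] <;> (try field_simp) <;> (try ring)
  -- P acts as +1 on Ep, -1 on Em
  have hPp : ∀ v ∈ Ep, P v = v := by
    have hle : Ep ≤ LinearMap.ker (P - 1) := by
      rw [hEp, Submodule.span_le]
      rintro v (rfl | rfl | rfl) <;>
        simp only [SetLike.mem_coe, LinearMap.mem_ker, LinearMap.sub_apply,
          Module.End.one_apply, sub_eq_zero] <;>
        [exact kg1; exact kg2; exact kg3]
    intro v hv
    have h := hle hv
    rw [LinearMap.mem_ker, LinearMap.sub_apply, Module.End.one_apply, sub_eq_zero] at h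
    exact h
  have hPm : ∀ v ∈ Em, P v = -v := by
    have hle : Em ≤ LinearMap.ker (P + 1) := by
      rw [hEm, Submodule.span_le]
      rintro v (rfl | rfl | rfl) <;>
        simp only [SetLike.mem_coe, LinearMap.mem_ker, LinearMap.add_apply,
          Module.End.one_apply, add_eq_zero_iff_eq_neg] <;>
        [exact kh1; exact kh2; exact kh3]
    intro v hv
    have h := hle hv
    rw [LinearMap.mem_ker, LinearMap.add_apply, Module.End.one_apply,
      add_eq_zero_iff_eq_neg] at h
    exact h
  -- Ep ⊔ Em = ⊤
  have h46 : ∀ (c : ℝ), c ≠ 0 → ∀ v : V, c • v ∈ Ep ⊔ Em → v ∈ Ep ⊔ Em := by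
    intro c hc v hv
    have h := (Ep ⊔ Em).smul_mem c⁻¹ hv
    rwa [smul_smul, inv_mul_cancel₀ hc, one_smul] at h
  have me0 : e 0 ∈ Ep ⊔ Em := Submodule.mem_sup_right hh1m
  have me1 : e 1 ∈ Ep ⊔ Em := by
    apply h46 a46 ha46
    have h : a46 • e 1 = (-a56 • e 0 + a46 • e 1) + a56 • e 0 := by module
    rw [h]
    exact add_mem (Submodule.mem_sup_left hg2m) (Submodule.smul_mem _ _ me0)
  have me2 : e 2 ∈ Ep ⊔ Em := by
    apply h46 a46 ha46
    have h : a46 • e 2 = (-a56 • e 1 + a46 • e 2) + a56 • e 1 := by module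
    rw [h]
    exact add_mem (Submodule.mem_sup_right hh2m) (Submodule.smul_mem _ _ me1)
  have me3 : e 3 ∈ Ep ⊔ Em := by
    apply h46 (a46^3) (pow_ne_zero 3 ha46)
    have h : a46^3 • e 3 = (a56^3 • e 0 - (a56*a46^2) • e 2 + a46^3 • e 3)
        - a56^3 • e 0 + (a56*a46^2) • e 2 := by module
    rw [h]
    exact add_mem (sub_mem (Submodule.mem_sup_left hg1m) (Submodule.smul_mem _ _ me0))
      (Submodule.smul_mem _ _ me2)
  have me4 : e 4 ∈ Ep ⊔ Em := Submodule.mem_sup_left hg3m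
  have me5 : e 5 ∈ Ep ⊔ Em := by
    apply h46 (a46^2) (pow_ne_zero 2 ha46)
    have h : a46^2 • e 5 = (-a56^2 • e 4 + a46^2 • e 5) + a56^2 • e 4 := by module
    rw [h]
    exact add_mem (Submodule.mem_sup_right hh3m) (Submodule.smul_mem _ _ me4)
  have htop : Ep ⊔ Em = ⊤ := by
    rw [eq_top_iff, ← (Pi.basisFun ℝ (Fin 6)).span_eq, Submodule.span_le]
    rintro _ ⟨i, rfl⟩
    have hb : Pi.basisFun ℝ (Fin 6) i = e i := by
      funext x; simp [e, Pi.basisFun_apply]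
    rw [hb]
    fin_cases i <;> assumption
  -- eigenspaces
  have hE1 : Module.End.eigenspace P 1 = Ep := by
    apply le_antisymm
    · intro v hv
      rw [Module.End.mem_eigenspace_iff, one_smul] at hv
      have hvt : v ∈ Ep ⊔ Em := htop ▸ Submodule.mem_top
      obtain ⟨x, hx, y, hy, rfl⟩ := Submodule.mem_sup.mp hvt
      have h' : x - y = x + y := by rw [← hv, map_add, hPp x hx, hPm y hy]; abel
      have hy0 : y = 0 := by
        have h2 : (2 : ℝ) • y = 0 := by
          have h3 := congrArg (fun w => w - (x - y)) h'
          simp only [sub_self] at h3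
          rw [show x + y - (x - y) = (2:ℝ) • y by rw [two_smul]; abel] at h3
          exact h3.symm
        simpa using (smul_eq_zero.mp h2).resolve_left (by norm_num)
      rw [hy0, add_zero]; exact hx
    · intro v hv
      rw [Module.End.mem_eigenspace_iff, one_smul]
      exact hPp v hv
  have hE2 : Module.End.eigenspace P (-1) = Em := by
    apply le_antisymm
    · intro v hv
      rw [Module.End.mem_eigenspace_iff, neg_smul, one_smul] at hv
      have hvt : v ∈ Ep ⊔ Em := htop ▸ Submodule.mem_top
      obtain ⟨x, hx, y, hy, rfl⟩ := Submodule.mem_sup.mp hvt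
      have h' : x - y = -(x + y) := by rw [← hv, map_add, hPp x hx, hPm y hy]; abel
      have hx0 : x = 0 := by
        have h2 : (2 : ℝ) • x = 0 := by
          have h3 := congrArg (fun w => w + (x + y)) h'
          simp only [neg_add_cancel] at h3
          rw [show x - y + (x + y) = (2:ℝ) • x by rw [two_smul]; abel] at h3
          exact h3
        simpa using (smul_eq_zero.mp h2).resolve_left (by norm_num)
      rw [hx0, zero_add]; exact hy
    · intro v hv
      rw [Module.End.mem_eigenspace_iff, neg_smul, one_smul]
      exact hPm v hv
  -- dimensions
  have hdp : Module.finrank ℝ Ep ≤ 3 := by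
    rw [hEp, show ({a56^3 • e 0 - (a56*a46^2) • e 2 + a46^3 • e 3, -a56 • e 0 + a46 • e 1, e 4} : Set V) = ↑({a56^3 • e 0 - (a56*a46^2) • e 2 + a46^3 • e 3, -a56 • e 0 + a46 • e 1, e 4} : Finset V) from by simp]
    exact le_trans (finrank_span_finset_le_card _) ((Finset.card_insert_le _ _).trans
      (Nat.succ_le_succ ((Finset.card_insert_le _ _).trans (by simp))))
  have hdm : Module.finrank ℝ Em ≤ 3 := by
    rw [hEm, show ({(e 0 : V), -a56 • e 1 + a46 • e 2, -a56^2 • e 4 + a46^2 • e 5} : Set V) = ↑({(e 0 : V), -a56 • e 1 + a46 • e 2, -a56^2 • e 4 + a46^2 • e 5} : Finset V) from by simp]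
    exact le_trans (finrank_span_finset_le_card _) ((Finset.card_insert_le _ _).trans
      (Nat.succ_le_succ ((Finset.card_insert_le _ _).trans (by simp))))
  have hsum : Module.finrank ℝ (Ep ⊔ Em : Submodule ℝ V) + Module.finrank ℝ (Ep ⊓ Em : Submodule ℝ V)
      = Module.finrank ℝ Ep + Module.finrank ℝ Em :=
    Submodule.finrank_sup_add_finrank_inf_eq Ep Em
  have htop6 : Module.finrank ℝ (Ep ⊔ Em : Submodule ℝ V) = 6 := by
    rw [htop, finrank_top]; simp
  have hdp3 : Module.finrank ℝ Ep = 3 ∧ Module.finrank ℝ Em = 3 := by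
    rw [htop6] at hsum; omega
  -- non-closure for Ep
  have hncp : ¬ (∀ X ∈ Ep, ∀ Y ∈ Ep, B X Y ∈ Ep) := by
    intro hcl
    have hb : B (-a56 • e 0 + a46 • e 1) (e 4) = -(a46 • e 5) := by
      simp only [map_add, map_smul, LinearMap.add_apply, LinearMap.smul_apply, hB6]
      rw [hBz 0 4 (by decide) (by decide)]
      module
    have hmem := hcl _ hg2m _ hg3m
    rw [hb] at hmem
    have hker : Ep ≤ LinearMap.ker (LinearMap.proj (R := ℝ) (φ := fun _ : Fin 6 => ℝ) 5) := by
      rw [hEp, Submodule.span_le]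
      rintro v (rfl | rfl | rfl) <;> simp [e, Pi.single_apply]
    have h := hker hmem
    simp [e, Pi.single_apply] at h
    exact ha46 h
  -- non-closure for Em
  have hncm : ¬ (∀ X ∈ Em, ∀ Y ∈ Em, B X Y ∈ Em) := by
    intro hcl
    have hb : B (e 0) (-a56 • e 1 + a46 • e 2) = -a56 • e 2 + a46 • e 3 := by
      simp only [map_add, map_smul, hB1, hB2]
    have hmem := hcl _ hh1m _ hh2m
    rw [hb] at hmem
    have hker : Em ≤ LinearMap.ker (LinearMap.proj (R := ℝ) (φ := fun _ : Fin 6 => ℝ) 3) := by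
      rw [hEm, Submodule.span_le]
      rintro v (rfl | rfl | rfl) <;> simp [e, Pi.single_apply]
    have h := hker hmem
    simp [e, Pi.single_apply] at h
    exact ha46 h
  exact ⟨hE1, hE2, hdp3.1, hdp3.2, hncp, hncm⟩
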